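/- The order complex of a strongly constructible poset is a constructible simplicial complex. -/

import Mathlib

open scoped BigOperators

/-- A (finite, abstract) simplicial complex on vertex set `V`:
a collection of finite subsets of `V` closed under taking subsets. -/
structure SC (V : Type*) where
  faces : Set (Finset V)
  down : ∀ ⦃s t : Finset V⦄, s ∈ faces → t ⊆ s → t ∈ faces

namespace SC

variable {V : Type*}

/-- The union of two simplicial complexes. -/
def union (Δ₁ Δ₂ : SC V) : SC V :=
  ⟨Δ₁.faces ∪ Δ₂.faces, by
    rintro s t (h | h) hts
    · exact Or.inl (Δ₁.down h hts)
    · exact Or.inr (Δ₂.down h hts)⟩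

/-- The intersection of two simplicial complexes. -/
def inter (Δ₁ Δ₂ : SC V) : SC V :=
  ⟨Δ₁.faces ∩ Δ₂.faces, fun _ _ h hts => ⟨Δ₁.down h.1 hts, Δ₂.down h.2 hts⟩⟩

/-- The simplex on a finite vertex set `s`: all subsets of `s`. -/
def simplex (s : Finset V) : SC V :=
  ⟨{t | t ⊆ s}, fun _ _ h h' => h'.trans h⟩

/-- The link of a face `F`: `{G \ F : G ∈ Δ, F ⊆ G}`. -/
def link [DecidableEq V] (Δ : SC V) (F : Finset V) : SC V :=
  ⟨{G | Disjoint G F ∧ G ∪ F ∈ Δ.faces}, by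
    rintro s t ⟨hd, hm⟩ hts
    exact ⟨hd.mono_left hts, Δ.down hm (Finset.union_subset_union hts le_rfl)⟩⟩

/-- The dimension of a simplicial complex, as an integer
(the complex `{∅}` has dimension `-1`). -/
noncomputable def dim (Δ : SC V) : ℤ :=
  sSup ((fun s : Finset V => (s.card : ℤ) - 1) '' Δ.faces)

/-- The geometric realization of a simplicial complex on a finite vertex set,
as a subspace of `V → ℝ`. -/
def realization [Fintype V] (Δ : SC V) : Set (V → ℝ) :=
  {f | (∀ v, 0 ≤ f v) ∧ (∑ v, f v) = 1 ∧ ∃ s ∈ Δ.faces, ∀ v, f v ≠ 0 → v ∈ s}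

end SC

/-- Constructibility (generalized): a `d`-dimensional complex is constructible
if it is a simplex, or the union of two `d`-dimensional constructible complexes
whose intersection is constructible of dimension at least `d - 1`. -/
inductive Constructible {V : Type*} : SC V → ℤ → Prop
  | simplex (s : Finset V) : Constructible (SC.simplex s) ((s.card : ℤ) - 1)
  | union {Δ₁ Δ₂ : SC V} {d e : ℤ} : Constructible Δ₁ d → Constructible Δ₂ d →
      d - 1 ≤ e → Constructible (SC.inter Δ₁ Δ₂) e →
      Constructible (SC.union Δ₁ Δ₂) d

/-- A topological space is `k`-connected if it is nonempty (for `k ≥ -1`) and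
all its homotopy groups `π_i` vanish for `0 ≤ i ≤ k`, at every basepoint. -/
def KConnected (k : ℤ) (X : Type*) [TopologicalSpace X] : Prop :=
  (-1 ≤ k → Nonempty X) ∧
    ∀ (x : X) (i : ℕ), (i : ℤ) ≤ k → Subsingleton (HomotopyGroup (Fin i) X x)

namespace SC

/-- The order complex of a poset `P`: the simplicial complex whose faces are
the finite chains of `P`. -/
def orderComplex (P : Type*) [PartialOrder P] : SC P :=
  ⟨{s | ∀ a ∈ s, ∀ b ∈ s, a ≤ b ∨ b ≤ a},
    fun s t hs hts a ha b hb => hs a (hts ha) b (hts hb)⟩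

end SC

/-- A simplicial complex is pure shellable of dimension `d` if its facets all
have dimension `d` and can be listed as `G₁, …, G_m` so that for `i > 1` the
intersection of `G₁ ∪ ⋯ ∪ G_{i-1}` with `G_i` is pure of dimension `d - 1`. -/
def PureShellable {V : Type*} (Δ : SC V) (d : ℕ) : Prop :=
  ∃ (m : ℕ) (G : Fin m → Finset V), 0 < m ∧
    (∀ i, G i ∈ Δ.faces ∧ (G i).card = d + 1) ∧
    (∀ s ∈ Δ.faces, ∃ i, s ⊆ G i) ∧
    ∀ i : Fin m, 0 < (i : ℕ) →
      ∀ s ⊆ G i, (∃ j, j < i ∧ s ⊆ G j) →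
        ∃ t, t ⊆ G i ∧ (∃ j, j < i ∧ t ⊆ G j) ∧ t.card = d ∧ s ⊆ t

/-- A poset has rank `d` if its longest chains have `d + 1` elements. -/
def HasRank (P : Type*) [Preorder P] (d : ℕ) : Prop :=
  (∃ l : List P, l.Chain' (· < ·) ∧ l.length = d + 1) ∧
    ∀ l : List P, l.Chain' (· < ·) → l.length ≤ d + 1

/-- Strong constructibility: a finite poset `P` of rank `d` with a minimum
element is strongly constructible if it is bounded and pure shellable, or it is
the union of two strongly constructible proper order ideals of rank `d` whose
intersection is strongly constructible of rank at least `d - 1`. -/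
inductive SConstr : ∀ (P : Type) [PartialOrder P], ℕ → Prop
  | base (P : Type) [PartialOrder P] [Finite P] (d : ℕ)
      (hbot : ∃ m : P, ∀ x, m ≤ x) (htop : ∃ M : P, ∀ x, x ≤ M)
      (hshell : PureShellable (SC.orderComplex P) d) : SConstr P d
  | union (P : Type) [PartialOrder P] [Finite P] (d e : ℕ) (I₁ I₂ : Set P)
      (hmin : ∃ m : P, ∀ x, m ≤ x) (hrank : HasRank P d)
      (hl1 : IsLowerSet I₁) (hl2 : IsLowerSet I₂)
      (hp1 : I₁ ≠ Set.univ) (hp2 : I₂ ≠ Set.univ)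
      (hcover : I₁ ∪ I₂ = Set.univ)
      (hr1 : HasRank I₁ d) (hr2 : HasRank I₂ d)
      (hc1 : SConstr I₁ d) (hc2 : SConstr I₂ d)
      (he : d - 1 ≤ e)
      (hre : HasRank ↥(I₁ ∩ I₂) e) (hce : SConstr ↥(I₁ ∩ I₂) e) :
      SConstr P d


lemma exists_of_subset_map {α β : Type*} (f : α ↪ β) {s : Finset β} {t : Finset α}
    (h : s ⊆ t.map f) : ∃ u ⊆ t, s = u.map f := by
  classical
  refine ⟨t.filter (fun a => f a ∈ s), Finset.filter_subset _ _, ?_⟩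
  ext b
  simp only [Finset.mem_map, Finset.mem_filter]
  constructor
  · intro hb
    obtain ⟨a, ha, rfl⟩ := Finset.mem_map.mp (h hb)
    exact ⟨a, ⟨ha, hb⟩, rfl⟩
  · rintro ⟨a, ⟨_, ha⟩, rfl⟩; exact ha

lemma SC_ext {V : Type*} {Δ₁ Δ₂ : SC V} (h : Δ₁.faces = Δ₂.faces) : Δ₁ = Δ₂ := by
  cases Δ₁; cases Δ₂; simp_all

def US {V : Type*} : Finset V → List (Finset V) → SC V
  | t, [] => SC.simplex t
  | t, s :: l => SC.union (US s l) (SC.simplex t)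

lemma mem_US {V : Type*} {x t : Finset V} {l : List (Finset V)} :
    x ∈ (US t l).faces ↔ x ⊆ t ∨ ∃ u ∈ l, x ⊆ u := by
  induction l generalizing t with
  | nil => simp [US, SC.simplex]
  | cons s l ih =>
    simp only [US, SC.union, Set.mem_union, ih, SC.simplex, Set.mem_setOf_eq, List.mem_cons]
    constructor
    · rintro ((h|⟨u,hu,hx⟩)|h)
      · exact Or.inr ⟨s, Or.inl rfl, h⟩
      · exact Or.inr ⟨u, Or.inr hu, hx⟩
      · exact Or.inl h
    · rintro (h|⟨u,(rfl|hu),hx⟩)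
      · exact Or.inr h
      · exact Or.inl (Or.inl hx)
      · exact Or.inl (Or.inr ⟨u, hu, hx⟩)

lemma card_inter_eq {V : Type*} [DecidableEq V] {c : ℕ} {G s t : Finset V} (hG : G.card ≤ c + 1)
    (hs : s ⊆ G) (ht : t ⊆ G) (hsc : s.card = c) (htc : t.card = c) (hns : ¬ t ⊆ s) :
    (s ∩ t).card = c - 1 ∧ 1 ≤ c := by
  classical
  have h1 : (s ∪ t).card + (s ∩ t).card = s.card + t.card := Finset.card_union_add_card_inter s t
  have h2 : (s ∪ t).card ≤ G.card := Finset.card_le_card (Finset.union_subset hs ht)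
  have h3 : s ∩ t ≠ t := by
    intro h; exact hns (by rw [← h]; exact Finset.inter_subset_left)
  have h4 : (s ∩ t).card < t.card :=
    Finset.card_lt_card (lt_of_le_of_ne Finset.inter_subset_right h3)
  omega

lemma lemA {V : Type*} (c : ℕ) :
    ∀ (G t : Finset V) (l : List (Finset V)), G.card ≤ c + 1 → t ⊆ G → t.card = c →
      (∀ u ∈ l, u ⊆ G ∧ u.card = c) → Constructible (US t l) ((c : ℤ) - 1) := by
  induction c using Nat.strong_induction_on with
  | _ c IH =>
  intro G t l
  induction l generalizing t with
  | nil =>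
    intro _ _ ht _
    rw [show (c : ℤ) - 1 = (t.card : ℤ) - 1 by rw [ht]]
    exact Constructible.simplex t
  | cons s l ihl =>
    intro hG htG htc hl
    classical
    by_cases hsub : ∃ u ∈ s :: l, t ⊆ u
    · obtain ⟨u, hu, htu⟩ := hsub
      have heq : US t (s :: l) = US s l := by
        apply SC_ext
        ext x
        rw [show US t (s :: l) = SC.union (US s l) (SC.simplex t) from rfl]
        show x ∈ (US s l).faces ∪ _ ↔ _
        simp only [Set.mem_union, SC.simplex, Set.mem_setOf_eq]
        constructor
        · rintro (h | h)
          · exact h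
          · rcases List.mem_cons.mp hu with rfl | hu'
            · exact mem_US.mpr (Or.inl (h.trans htu))
            · exact mem_US.mpr (Or.inr ⟨u, hu', h.trans htu⟩)
        · exact Or.inl
      rw [heq]
      exact ihl s hG (hl s List.mem_cons_self).1 (hl s List.mem_cons_self).2
        (fun u hu => hl u (List.mem_cons_of_mem s hu))
    · push_neg at hsub
      have hts : ¬ t ⊆ s := hsub s List.mem_cons_self
      obtain ⟨hcard, hc1⟩ := card_inter_eq hG (hl s List.mem_cons_self).1 htG
        (hl s List.mem_cons_self).2 htc hts
      have hinter : (US s l).inter (SC.simplex t) = US (s ∩ t) (l.map (· ∩ t)) := by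
        apply SC_ext
        ext x
        show x ∈ (US s l).faces ∩ _ ↔ _
        simp only [Set.mem_inter_iff, SC.simplex, Set.mem_setOf_eq, mem_US, List.mem_map]
        constructor
        · rintro ⟨h | ⟨u, hu, hxu⟩, hxt⟩
          · exact Or.inl (Finset.subset_inter h hxt)
          · exact Or.inr ⟨u ∩ t, ⟨u, hu, rfl⟩, Finset.subset_inter hxu hxt⟩
        · rintro (h | ⟨_, ⟨u, hu, rfl⟩, hx⟩)
          · exact ⟨Or.inl (h.trans Finset.inter_subset_left), h.trans Finset.inter_subset_right⟩
          · exact ⟨Or.inr ⟨u, hu, hx.trans Finset.inter_subset_left⟩,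
              hx.trans Finset.inter_subset_right⟩
      have hintc : Constructible ((US s l).inter (SC.simplex t)) ((c : ℤ) - 1 - 1) := by
        rw [hinter]
        have := IH (c - 1) (by omega) t (s ∩ t) (l.map (· ∩ t)) (by omega)
          Finset.inter_subset_right hcard ?_
        · rw [show ((c - 1 : ℕ) : ℤ) - 1 = (c : ℤ) - 1 - 1 by omega] at this
          exact this
        · intro x hx
          obtain ⟨u, hu, rfl⟩ := List.mem_map.mp hx
          have := card_inter_eq hG (hl u (List.mem_cons_of_mem s hu)).1 htG
            (hl u (List.mem_cons_of_mem s hu)).2 htc (hsub u (List.mem_cons_of_mem s hu))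
          exact ⟨Finset.inter_subset_right, this.1⟩
      have h1 : Constructible (US s l) ((c : ℤ) - 1) :=
        ihl s hG (hl s List.mem_cons_self).1 (hl s List.mem_cons_self).2
          (fun u hu => hl u (List.mem_cons_of_mem s hu))
      have h2 : Constructible (SC.simplex t) ((c : ℤ) - 1) := by
        rw [show (c : ℤ) - 1 = (t.card : ℤ) - 1 by rw [htc]]
        exact Constructible.simplex t
      exact Constructible.union h1 h2 le_rfl hintc

lemma shellable_constructible {V : Type*} {Δ : SC V} {d : ℕ}
    (h : PureShellable Δ d) : Constructible Δ (d : ℤ) := by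
  classical
  obtain ⟨m, G, hm, hfac, hcov, hshell⟩ := h
  set g : ℕ → Finset V := fun j => if hj : j < m then G ⟨j, hj⟩ else G ⟨0, hm⟩ with hg
  have hgj : ∀ j (hj : j < m), g j = G ⟨j, hj⟩ := fun j hj => dif_pos hj
  set pl : ℕ → List (Finset V) := fun k => ((List.range k).reverse).map g with hpl
  have hmem_pl : ∀ {u : Finset V} {k : ℕ}, u ∈ pl k ↔ ∃ j < k, g j = u := by
    intro u k
    simp [hpl, List.mem_map, eq_comm]
  have hpl_succ : ∀ k, pl (k + 1) = g k :: pl k := by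
    intro k
    simp [hpl, List.range_succ]
  have hmemUS : ∀ {x : Finset V} {k : ℕ}, x ∈ (US (g k) (pl k)).faces ↔ ∃ j ≤ k, x ⊆ g j := by
    intro x k
    rw [mem_US]
    constructor
    · rintro (h | ⟨u, hu, hxu⟩)
      · exact ⟨k, le_rfl, h⟩
      · obtain ⟨j, hj, rfl⟩ := hmem_pl.mp hu
        exact ⟨j, by omega, hxu⟩
    · rintro ⟨j, hj, hxj⟩
      rcases eq_or_lt_of_le hj with rfl | hj'
      · exact Or.inl hxj
      · exact Or.inr ⟨g j, hmem_pl.mpr ⟨j, hj', rfl⟩, hxj⟩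
  have hcard : ∀ j, j < m → (g j).card = d + 1 := by
    intro j hj; rw [hgj j hj]; exact (hfac _).2
  have hgface : ∀ j, j < m → g j ∈ Δ.faces := by
    intro j hj; rw [hgj j hj]; exact (hfac _).1
  have hshell' : ∀ k, k + 1 < m → ∀ s ⊆ g (k + 1), (∃ j ≤ k, s ⊆ g j) →
      ∃ t, t ⊆ g (k + 1) ∧ (∃ j ≤ k, t ⊆ g j) ∧ t.card = d ∧ s ⊆ t := by
    intro k hk s hs hex
    obtain ⟨j, hj, hsj⟩ := hex
    have hjm : j < m := by omega
    obtain ⟨t, ht1, ⟨j', hj', htj'⟩, ht3, ht4⟩ :=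
      hshell ⟨k + 1, hk⟩ (by simp) s (by rwa [← hgj _ hk]) ⟨⟨j, hjm⟩, by
        refine ⟨?_, ?_⟩
        · show j < k + 1
          omega
        · rwa [hgj _ hjm] at hsj⟩
    have hj'k : (j' : ℕ) < k + 1 := hj'
    refine ⟨t, by rwa [hgj _ hk], ⟨(j' : ℕ), by omega, ?_⟩, ht3, ht4⟩
    rw [hgj _ j'.isLt]
    exact htj'
  have key : ∀ k, k < m → Constructible (US (g k) (pl k)) (d : ℤ) := by
    intro k
    induction k with
    | zero =>
      intro h0
      have : pl 0 = [] := by simp [hpl]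
      rw [this, show US (g 0) [] = SC.simplex (g 0) from rfl,
        show (d : ℤ) = ((g 0).card : ℤ) - 1 by rw [hcard 0 h0]; push_cast; ring]
      exact Constructible.simplex (g 0)
    | succ k ih =>
      intro hk1
      have hkm : k < m := by omega
      have ihc := ih hkm
      rw [hpl_succ k]
      by_cases hcase : ∃ j ≤ k, g (k + 1) ⊆ g j
      · obtain ⟨j, hj, hsub⟩ := hcase
        have heq : US (g (k + 1)) (g k :: pl k) = US (g k) (pl k) := by
          apply SC_ext
          ext x
          rw [show US (g (k + 1)) (g k :: pl k) = SC.union (US (g k) (pl k))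
            (SC.simplex (g (k + 1))) from rfl]
          show x ∈ (US (g k) (pl k)).faces ∪ _ ↔ _
          simp only [Set.mem_union, SC.simplex, Set.mem_setOf_eq]
          constructor
          · rintro (h | h)
            · exact h
            · exact hmemUS.mpr ⟨j, hj, h.trans hsub⟩
          · exact Or.inl
        rw [heq]
        exact ihc
      · obtain ⟨t₀, ht₀1, ht₀2, ht₀3, -⟩ := hshell' k hk1 ∅ (Finset.empty_subset _)
          ⟨0, Nat.zero_le k, Finset.empty_subset _⟩
        set T : List (Finset V) :=
          ((g (k + 1)).powerset.filter
            (fun t => t.card = d ∧ ∃ j ≤ k, t ⊆ g j)).toList with hT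
        have hmemT : ∀ {u : Finset V}, u ∈ T ↔
            u ⊆ g (k + 1) ∧ u.card = d ∧ ∃ j ≤ k, u ⊆ g j := by
          intro u
          rw [hT, Finset.mem_toList, Finset.mem_filter, Finset.mem_powerset]
        have hinter : (US (g k) (pl k)).inter (SC.simplex (g (k + 1))) = US t₀ T := by
          apply SC_ext
          ext x
          show x ∈ (US (g k) (pl k)).faces ∩ _ ↔ _
          simp only [Set.mem_inter_iff, SC.simplex, Set.mem_setOf_eq, mem_US, hmemUS]
          constructor
          · rintro ⟨hx1, hx2⟩
            obtain ⟨t, ht1, ht2, ht3, ht4⟩ := hshell' k hk1 x hx2 hx1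
            exact Or.inr ⟨t, hmemT.mpr ⟨ht1, ht3, ht2⟩, ht4⟩
          · rintro (h | ⟨u, hu, hxu⟩)
            · exact ⟨⟨ht₀2.choose, ht₀2.choose_spec.1, h.trans ht₀2.choose_spec.2⟩,
                h.trans ht₀1⟩
            · obtain ⟨hu1, hu2, j, hj, hu3⟩ := hmemT.mp hu
              exact ⟨⟨j, hj, hxu.trans hu3⟩, hxu.trans hu1⟩
        have hintc : Constructible ((US (g k) (pl k)).inter (SC.simplex (g (k + 1))))
            ((d : ℤ) - 1) := by
          rw [hinter]
          exact lemA d (g (k + 1)) t₀ T (le_of_eq (hcard _ hk1)) ht₀1 ht₀3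
            (fun u hu => ⟨(hmemT.mp hu).1, (hmemT.mp hu).2.1⟩)
        have h2 : Constructible (SC.simplex (g (k + 1))) (d : ℤ) := by
          rw [show (d : ℤ) = ((g (k + 1)).card : ℤ) - 1 by rw [hcard _ hk1]; push_cast; ring]
          exact Constructible.simplex _
        exact Constructible.union ihc h2 le_rfl hintc
  have hfin : Δ = US (g (m - 1)) (pl (m - 1)) := by
    apply SC_ext
    ext x
    rw [show (x ∈ Δ.faces) ↔ Δ.faces x from Iff.rfl, show (x ∈ (US (g (m - 1)) (pl (m - 1))).faces) ↔ _ from hmemUS]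
    constructor
    · intro hx
      obtain ⟨i, hi⟩ := hcov x hx
      refine ⟨(i : ℕ), by omega, ?_⟩
      rw [hgj _ i.isLt]
      convert hi using 2
    · rintro ⟨j, hj, hxj⟩
      exact Δ.down (hgface j (by omega)) hxj
  rw [hfin]
  exact key (m - 1) (by omega)

def SC.fmap {A B : Type*} (f : A ↪ B) (Δ : SC A) : SC B :=
  ⟨{s | ∃ t ∈ Δ.faces, s = t.map f}, by
    rintro s u ⟨t, ht, rfl⟩ hus
    obtain ⟨t', ht', rfl⟩ := exists_of_subset_map f hus
    exact ⟨t', Δ.down ht ht', rfl⟩⟩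

lemma fmap_simplex {A B : Type*} (f : A ↪ B) (s : Finset A) :
    SC.fmap f (SC.simplex s) = SC.simplex (s.map f) := by
  apply SC_ext
  ext x
  simp only [SC.fmap, SC.simplex, Set.mem_setOf_eq]
  constructor
  · rintro ⟨t, ht, rfl⟩
    exact Finset.map_subset_map.mpr ht
  · intro hx
    obtain ⟨t, ht, rfl⟩ := exists_of_subset_map f hx
    exact ⟨t, ht, rfl⟩

lemma fmap_union {A B : Type*} (f : A ↪ B) (Δ₁ Δ₂ : SC A) :
    SC.fmap f (SC.union Δ₁ Δ₂) = SC.union (SC.fmap f Δ₁) (SC.fmap f Δ₂) := by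
  apply SC_ext
  ext x
  simp only [SC.fmap, SC.union, Set.mem_setOf_eq, Set.mem_union]
  constructor
  · rintro ⟨t, ht | ht, rfl⟩
    · exact Or.inl ⟨t, ht, rfl⟩
    · exact Or.inr ⟨t, ht, rfl⟩
  · rintro (⟨t, ht, rfl⟩ | ⟨t, ht, rfl⟩)
    · exact ⟨t, Or.inl ht, rfl⟩
    · exact ⟨t, Or.inr ht, rfl⟩

lemma fmap_inter {A B : Type*} (f : A ↪ B) (Δ₁ Δ₂ : SC A) :
    SC.fmap f (SC.inter Δ₁ Δ₂) = SC.inter (SC.fmap f Δ₁) (SC.fmap f Δ₂) := by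
  apply SC_ext
  ext x
  simp only [SC.fmap, SC.inter, Set.mem_setOf_eq, Set.mem_inter_iff]
  constructor
  · rintro ⟨t, ⟨ht1, ht2⟩, rfl⟩
    exact ⟨⟨t, ht1, rfl⟩, ⟨t, ht2, rfl⟩⟩
  · rintro ⟨⟨t, ht1, rfl⟩, ⟨t', ht2, he⟩⟩
    have : t' = t := Finset.map_injective f he.symm
    subst this
    exact ⟨t', ⟨ht1, ht2⟩, rfl⟩

lemma constructible_fmap {A B : Type*} (f : A ↪ B) {Δ : SC A} {d : ℤ}
    (h : Constructible Δ d) : Constructible (SC.fmap f Δ) d := by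
  induction h with
  | simplex s =>
    rw [fmap_simplex, show (s.card : ℤ) = ((s.map f).card : ℤ) by rw [Finset.card_map]]
    exact Constructible.simplex _
  | union h1 h2 hde hi ih1 ih2 ihi =>
    rw [fmap_union]
    refine Constructible.union ih1 ih2 hde ?_
    rw [← fmap_inter]
    exact ihi

lemma chain_exists_max {P : Type*} [PartialOrder P] {x : Finset P}
    (hx : x ∈ (SC.orderComplex P).faces) (hne : x.Nonempty) :
    ∃ a ∈ x, ∀ b ∈ x, b ≤ a := by
  obtain ⟨a, ha, hmax⟩ : ∃ a ∈ x, ∀ b ∈ x, ¬ a < b := by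
    obtain ⟨a, ha⟩ := Finset.exists_maximal hne
    exact ⟨a, ha.prop, fun b hb => ha.not_gt hb⟩
  refine ⟨a, ha, fun b hb => ?_⟩
  rcases hx a ha b hb with h | h
  · rcases lt_or_eq_of_le h with h' | h'
    · exact absurd h' (hmax b hb)
    · exact le_of_eq h'.symm
  · exact h

lemma faces_fmap_orderComplex {P : Type*} [PartialOrder P] (I : Set P) (x : Finset P) :
    x ∈ (SC.fmap (Function.Embedding.subtype (· ∈ I)) (SC.orderComplex ↥I)).faces ↔
      x ∈ (SC.orderComplex P).faces ∧ ∀ a ∈ x, a ∈ I := by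
  classical
  constructor
  · rintro ⟨t, ht, rfl⟩
    constructor
    · intro a ha b hb
      obtain ⟨a', ha', rfl⟩ := Finset.mem_map.mp ha
      obtain ⟨b', hb', rfl⟩ := Finset.mem_map.mp hb
      rcases ht a' ha' b' hb' with h | h
      · exact Or.inl h
      · exact Or.inr h
    · intro a ha
      obtain ⟨a', _, rfl⟩ := Finset.mem_map.mp ha
      exact a'.2
  · rintro ⟨hch, hsub⟩
    refine ⟨x.subtype (· ∈ I), ?_, ?_⟩
    · intro a ha b hb
      rw [Finset.mem_subtype] at ha hb
      rcases hch a ha b hb with h | h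
      · exact Or.inl h
      · exact Or.inr h
    · rw [Finset.subtype_map, Finset.filter_true_of_mem hsub]

theorem orderComplex_constructible_aux :
    ∀ (P : Type) [PartialOrder P] (d : ℕ), SConstr P d →
      Constructible (SC.orderComplex P) (d : ℤ) := by
  intro P instP d h
  induction h with
  | base Q d hbot htop hshell => exact shellable_constructible hshell
  | union Q d e I₁ I₂ hmin hrank hl1 hl2 hp1 hp2 hcover hr1 hr2 hc1 hc2 he hre hce ih1 ih2 ihe =>
    classical
    set f1 := Function.Embedding.subtype (· ∈ I₁)
    set f2 := Function.Embedding.subtype (· ∈ I₂)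
    set fe := Function.Embedding.subtype (· ∈ I₁ ∩ I₂)
    have huniv : ∀ a : Q, a ∈ I₁ ∪ I₂ := by rw [hcover]; intro a; trivial
    have e1 : SC.orderComplex Q = SC.union (SC.fmap f1 (SC.orderComplex ↥I₁))
        (SC.fmap f2 (SC.orderComplex ↥I₂)) := by
      apply SC_ext
      ext x
      show _ ↔ x ∈ _ ∪ _
      rw [Set.mem_union]
      rw [show (x ∈ (SC.fmap f1 (SC.orderComplex ↥I₁)).faces) ↔ _ from
        faces_fmap_orderComplex I₁ x]
      rw [show (x ∈ (SC.fmap f2 (SC.orderComplex ↥I₂)).faces) ↔ _ from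
        faces_fmap_orderComplex I₂ x]
      constructor
      · intro hx
        rcases Finset.eq_empty_or_nonempty x with rfl | hne
        · exact Or.inl ⟨hx, by simp⟩
        · obtain ⟨a, ha, hmax⟩ := chain_exists_max hx hne
          rcases huniv a with haI | haI
          · exact Or.inl ⟨hx, fun b hb => hl1 (hmax b hb) haI⟩
          · exact Or.inr ⟨hx, fun b hb => hl2 (hmax b hb) haI⟩
      · rintro (⟨hx, -⟩ | ⟨hx, -⟩) <;> exact hx
    have e2 : SC.inter (SC.fmap f1 (SC.orderComplex ↥I₁)) (SC.fmap f2 (SC.orderComplex ↥I₂)) =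
        SC.fmap fe (SC.orderComplex ↥(I₁ ∩ I₂)) := by
      apply SC_ext
      ext x
      show x ∈ _ ∩ _ ↔ _
      rw [Set.mem_inter_iff]
      rw [show (x ∈ (SC.fmap f1 (SC.orderComplex ↥I₁)).faces) ↔ _ from
        faces_fmap_orderComplex I₁ x]
      rw [show (x ∈ (SC.fmap f2 (SC.orderComplex ↥I₂)).faces) ↔ _ from
        faces_fmap_orderComplex I₂ x]
      rw [show (x ∈ (SC.fmap fe (SC.orderComplex ↥(I₁ ∩ I₂))).faces) ↔ _ from
        faces_fmap_orderComplex (I₁ ∩ I₂) x]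
      constructor
      · rintro ⟨⟨hx, h1⟩, ⟨-, h2⟩⟩
        exact ⟨hx, fun a ha => ⟨h1 a ha, h2 a ha⟩⟩
      · rintro ⟨hx, hsub⟩
        exact ⟨⟨hx, fun a ha => (hsub a ha).1⟩, ⟨hx, fun a ha => (hsub a ha).2⟩⟩
    rw [e1]
    have hi : Constructible (SC.inter (SC.fmap f1 (SC.orderComplex ↥I₁))
        (SC.fmap f2 (SC.orderComplex ↥I₂))) (e : ℤ) := by
      rw [e2]
      exact constructible_fmap fe ihe
    exact Constructible.union (constructible_fmap f1 ih1) (constructible_fmap f2 ih2)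
      (by omega) hi

/-- The order complex of a strongly constructible poset is a constructible
simplicial complex. -/
theorem orderComplex_constructible (P : Type) [PartialOrder P] [Finite P]
    (d : ℕ) (h : SConstr P d) : Constructible (SC.orderComplex P) (d : ℤ) := by
  exact orderComplex_constructible_aux P d h
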